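/- Let R be a commutative ring, m even, l ≥ 1. Let A ∈ R^{m×l} with row-blocks A₁, A₂ ∈ R^{(m/2)×l}, and let b ∈ R^m be a column vector with blocks b₁, b₂ ∈ R^{m/2}. Let 𝟙 ∈ R^{1×l} be the all-ones row vector. Define U = A₂ + b₁𝟙, V = A₁ + b₂𝟙 ∈ R^{(m/2)×l}, and W = A₂ᵀA₁ + 𝟙ᵀ(b₁ᵀb₂)𝟙 ∈ R^{l×l}. Then for every i ∈ {1,…,l}, the i-th diagonal entry of UᵀV − W equals the i-th entry of the matrix-vector product Aᵀb, i.e., diag(UᵀV − W) = Aᵀb. -/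

import Mathlib

open Matrix

/-- Matrix-vector product recovery: with `U = A₂ + b₁𝟙`, `V = A₁ + b₂𝟙`,
`W = A₂ᵀA₁ + 𝟙ᵀ(b₁ᵀb₂)𝟙`, the diagonal of `UᵀV − W` equals `Aᵀb`. -/
theorem stmt15 (R : Type) [CommRing R] (k l : ℕ)
    (A₁ A₂ : Matrix (Fin k) (Fin l) R) (b₁ b₂ : Fin k → R) :
    let U : Matrix (Fin k) (Fin l) R := A₂ + Matrix.of fun i _ => b₁ i
    let V : Matrix (Fin k) (Fin l) R := A₁ + Matrix.of fun i _ => b₂ i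
    let W : Matrix (Fin l) (Fin l) R :=
      A₂ᵀ * A₁ + Matrix.of fun _ _ => dotProduct b₁ b₂
    ∀ i : Fin l, (Uᵀ * V - W) i i
      = (Matrix.fromRows A₁ A₂)ᵀ.mulVec (Sum.elim b₁ b₂) i := by
  intro U V W i
  simp [U, V, W, mul_apply, mulVec, dotProduct, transpose_apply, Fintype.sum_sum_type,
    add_mul, mul_add, Finset.sum_add_distrib, mul_comm]
  ring
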